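/- Let d, k, N be integers with N > d > k ≥ 1. Then Q_{d,k}(N+1) < Q_{d,k}(N); that is, the normalized expected k-face number of the Cover–Efron cone is strictly decreasing in N. -/
import Mathlib


open Filter Finset Real

lemma choose_mul_le (n k : ℕ) (a b : ℕ) (hab : a ≤ b) :
    n.choose a * (n + k).choose (b + k) ≤ n.choose b * (n + k).choose (a + k) := by
  induction b, hab using Nat.le_induction with
  | base => rfl
  | succ b hab ih =>
    have h1 : (n + k).choose (b + k + 1) * (b + k + 1) = (n + k).choose (b + k) * (n + k - (b + k)) :=
      Nat.choose_succ_right_eq _ _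
    have h2 : n.choose (b + 1) * (b + 1) = n.choose b * (n - b) :=
      Nat.choose_succ_right_eq _ _
    have h3 : n + k - (b + k) = n - b := by omega
    rw [h3] at h1
    have hpos : 0 < (b + k + 1) * (b + 1) := by positivity
    have key : n.choose a * (n + k).choose (b + 1 + k) * ((b + k + 1) * (b + 1))
        ≤ n.choose (b + 1) * (n + k).choose (a + k) * ((b + k + 1) * (b + 1)) := by
      have e1 : n.choose a * (n + k).choose (b + 1 + k) * ((b + k + 1) * (b + 1))
          = (n.choose a * (n + k).choose (b + k)) * ((n - b) * (b + 1)) := by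
        have : b + 1 + k = b + k + 1 := by omega
        rw [this]
        calc n.choose a * (n + k).choose (b + k + 1) * ((b + k + 1) * (b + 1))
            = n.choose a * ((n + k).choose (b + k + 1) * (b + k + 1)) * (b + 1) := by ring
          _ = n.choose a * ((n + k).choose (b + k) * (n - b)) * (b + 1) := by rw [h1]
          _ = (n.choose a * (n + k).choose (b + k)) * ((n - b) * (b + 1)) := by ring
      have e2 : n.choose (b + 1) * (n + k).choose (a + k) * ((b + k + 1) * (b + 1))
          = (n.choose b * (n + k).choose (a + k)) * ((n - b) * (b + k + 1)) := by
        calc n.choose (b + 1) * (n + k).choose (a + k) * ((b + k + 1) * (b + 1))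
            = (n.choose (b + 1) * (b + 1)) * (n + k).choose (a + k) * (b + k + 1) := by ring
          _ = (n.choose b * (n - b)) * (n + k).choose (a + k) * (b + k + 1) := by rw [h2]
          _ = (n.choose b * (n + k).choose (a + k)) * ((n - b) * (b + k + 1)) := by ring
      rw [e1, e2]
      exact Nat.mul_le_mul ih (Nat.mul_le_mul_left _ (by omega))
    exact Nat.le_of_mul_le_mul_right key hpos

lemma pascal_sum (n t : ℕ) :
    ∑ i ∈ Finset.range (t + 1), (n + 1).choose i
      = ∑ i ∈ Finset.range (t + 1), n.choose i + ∑ i ∈ Finset.range t, n.choose i := by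
  induction t with
  | zero => simp
  | succ t ih =>
    rw [Finset.sum_range_succ, ih, Finset.sum_range_succ (f := n.choose) (n := t + 1),
      Finset.sum_range_succ (f := n.choose) (n := t), Nat.choose_succ_succ]
    ring

lemma key_ineq (m k s : ℕ) (hk : 1 ≤ k) (hs : s ≤ m) :
    (∑ i ∈ Finset.range s, m.choose i) * (m + k).choose (s + k)
      < m.choose s * ∑ i ∈ Finset.range (s + k), (m + k).choose i := by
  have h1 : (∑ i ∈ Finset.range s, m.choose i) * (m + k).choose (s + k)
      ≤ m.choose s * ∑ i ∈ Finset.range s, (m + k).choose (k + i) := by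
    rw [Finset.sum_mul, Finset.mul_sum]
    apply Finset.sum_le_sum
    intro i hi
    have := choose_mul_le m k i s (le_of_lt (Finset.mem_range.mp hi))
    have hcomm : k + i = i + k := by omega
    rw [hcomm]
    exact this
  have h2 : ∑ i ∈ Finset.range (s + k), (m + k).choose i
      = ∑ i ∈ Finset.range k, (m + k).choose i + ∑ i ∈ Finset.range s, (m + k).choose (k + i) := by
    rw [show s + k = k + s by omega, Finset.sum_range_add]
  have h3 : 1 ≤ ∑ i ∈ Finset.range k, (m + k).choose i := by
    calc 1 = (m + k).choose 0 := by simp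
      _ ≤ ∑ i ∈ Finset.range k, (m + k).choose i :=
        Finset.single_le_sum (fun i _ => Nat.zero_le _) (Finset.mem_range.mpr hk)
  have h4 : 1 ≤ m.choose s := Nat.choose_pos hs
  rw [h2, Nat.mul_add]
  have : 1 ≤ m.choose s * ∑ i ∈ Finset.range k, (m + k).choose i :=
    Nat.one_le_iff_ne_zero.mpr (by positivity)
  omega

lemma main_nat (m k s : ℕ) (hk : 1 ≤ k) (hs : s + 1 ≤ m) :
    (∑ i ∈ Finset.range (s + 1), (m + 1).choose i) * (∑ i ∈ Finset.range (s + 1 + k), (m + k).choose i)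
      < (∑ i ∈ Finset.range (s + 1), m.choose i) * (∑ i ∈ Finset.range (s + 1 + k), (m + k + 1).choose i) := by
  have p1 := pascal_sum m s
  have p2 := pascal_sum (m + k) (s + k)
  rw [show s + 1 + k = s + k + 1 by omega, p1, p2]
  have key := key_ineq m k s hk (by omega)
  have e1 : ∑ i ∈ Finset.range (s + 1), m.choose i
      = ∑ i ∈ Finset.range s, m.choose i + m.choose s := Finset.sum_range_succ _ _
  have e2 : ∑ i ∈ Finset.range (s + k + 1), (m + k).choose i
      = ∑ i ∈ Finset.range (s + k), (m + k).choose i + (m + k).choose (s + k) := Finset.sum_range_succ _ _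
  rw [e1, e2]
  nlinarith [key]

/-- `Q d k N = 2^k · (Σ_{i=0}^{d-k-1} C(N-k-1, i)) / (Σ_{i=0}^{d-1} C(N-1, i))`,
the normalized expected `k`-face number `E f_k(C_N)/C(N,k)` of the Cover–Efron cone. -/
noncomputable def Q (d k N : ℕ) : ℝ :=
  2 ^ k * (∑ i ∈ Finset.range (d - k), ((N - k - 1).choose i : ℝ)) /
    (∑ i ∈ Finset.range d, ((N - 1).choose i : ℝ))

theorem Q_strict_anti (d k N : ℕ) (hk : 1 ≤ k) (hkd : k < d) (hdN : d < N) :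
    Q d k (N + 1) < Q d k N := by
  unfold Q
  set s := d - k - 1 with hsdef
  set m := N - k - 1 with hmdef
  have hdk : d - k = s + 1 := by omega
  have h1 : N + 1 - k - 1 = m + 1 := by omega
  have h2 : N - 1 = m + k := by omega
  have h3 : N + 1 - 1 = m + k + 1 := by omega
  have hd : d = s + 1 + k := by omega
  have hsm : s + 1 ≤ m := by omega
  have hnat := main_nat m k s hk hsm
  rw [hdk, h1, h2, h3, hd]
  have hBpos : (0:ℝ) < ∑ i ∈ Finset.range (s + 1 + k), ((m + k).choose i : ℝ) := by
    apply Finset.sum_pos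
    · intro i hi
      exact_mod_cast Nat.choose_pos (by
        have := Finset.mem_range.mp hi
        omega)
    · exact Finset.nonempty_range_iff.mpr (by omega)
  have hB'pos : (0:ℝ) < ∑ i ∈ Finset.range (s + 1 + k), ((m + k + 1).choose i : ℝ) := by
    apply Finset.sum_pos
    · intro i hi
      exact_mod_cast Nat.choose_pos (by
        have := Finset.mem_range.mp hi
        omega)
    · exact Finset.nonempty_range_iff.mpr (by omega)
  rw [div_lt_div_iff₀ hB'pos hBpos]
  have h2k : (0:ℝ) < 2 ^ k := by positivity
  rw [mul_assoc, mul_assoc]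
  apply mul_lt_mul_of_pos_left _ h2k
  exact_mod_cast hnat
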